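/- Let A be an n×n real Z-matrix with game value zero. If the matrix game of A is completely mixed, then A is irreducible. -/

import Mathlib

open Matrix

variable {n : ℕ}

/-- A Z-matrix: all off-diagonal entries nonpositive. -/
def IsZMatrix (A : Matrix (Fin n) (Fin n) ℝ) : Prop :=
  ∀ i j, i ≠ j → A i j ≤ 0

/-- Irreducibility of a matrix: for every nonempty proper subset `S` of the indices,
some entry `A i j` with `i ∈ S`, `j ∉ S` is nonzero (equivalently, no simultaneous
row/column permutation gives a block triangular form with a zero off-diagonal block). -/
def MatIrreducible (A : Matrix (Fin n) (Fin n) ℝ) : Prop :=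
  ∀ S : Finset (Fin n), S.Nonempty → S ≠ Finset.univ →
    ∃ i ∈ S, ∃ j, j ∉ S ∧ A i j ≠ 0

/-- The probability simplex in `ℝⁿ`. -/
def probSimplex (n : ℕ) : Set (Fin n → ℝ) :=
  {x | (∀ i, 0 ≤ x i) ∧ ∑ i, x i = 1}

/-- The minimax value of the zero-sum matrix game of `A`. -/
noncomputable def matGameValue (A : Matrix (Fin n) (Fin n) ℝ) : ℝ :=
  ⨆ x : probSimplex n, ⨅ y : probSimplex n, dotProduct (A.mulVec x) (y : Fin n → ℝ)

/-- `(xb, yb)` is an optimal strategy pair for the matrix game of `A`. -/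
def MatOptPair (A : Matrix (Fin n) (Fin n) ℝ) (xb yb : Fin n → ℝ) : Prop :=
  xb ∈ probSimplex n ∧ yb ∈ probSimplex n ∧
    ∀ x ∈ probSimplex n, ∀ y ∈ probSimplex n,
      dotProduct (A.mulVec x) yb ≤ dotProduct (A.mulVec xb) yb ∧
      dotProduct (A.mulVec xb) yb ≤ dotProduct (A.mulVec xb) y

lemma probSimplex_eq_stdSimplex : probSimplex n = stdSimplex ℝ (Fin n) := rfl

lemma simplex_alt (B : Matrix (Fin n) (Fin n) ℝ) (x0 : Fin n → ℝ) (hx0 : x0 ∈ probSimplex n)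
    (h : ¬ ∃ y ∈ probSimplex n, ∀ i, B.mulVec y i ≤ 0) :
    ∃ x ∈ probSimplex n, ∃ ε > 0, ∀ y ∈ probSimplex n, ε ≤ ∑ i, x i * B.mulVec y i := by
  classical
  set K : Set (Fin n → ℝ) := B.mulVecLin '' probSimplex n with hKdef
  set N : Set (Fin n → ℝ) := {z | ∀ i, z i ≤ 0} with hNdef
  have hKconv : Convex ℝ K := by
    rw [hKdef, probSimplex_eq_stdSimplex]
    exact (convex_stdSimplex ℝ (Fin n)).linear_image _
  have hKcomp : IsCompact K := by
    rw [hKdef, probSimplex_eq_stdSimplex]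
    exact (isCompact_stdSimplex ℝ (Fin n)).image B.mulVecLin.continuous_of_finiteDimensional
  have hNconv : Convex ℝ N := by
    intro a ha b hb s t hs ht hst i
    have := ha i; have := hb i
    have h1 : s * a i ≤ 0 := mul_nonpos_of_nonneg_of_nonpos hs (ha i)
    have h2 : t * b i ≤ 0 := mul_nonpos_of_nonneg_of_nonpos ht (hb i)
    simpa [Pi.add_apply, smul_eq_mul] using add_nonpos h1 h2
  have hNclosed : IsClosed N := by
    have : N = ⋂ i, {z : Fin n → ℝ | z i ≤ 0} := by ext z; simp [hNdef]
    rw [this]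
    exact isClosed_iInter fun i => isClosed_le (continuous_apply i) continuous_const
  have hdisj : Disjoint K N := by
    rw [Set.disjoint_left]
    rintro w ⟨y, hy, rfl⟩ hw
    exact h ⟨y, hy, fun i => by simpa [Matrix.mulVecLin_apply] using hw i⟩
  obtain ⟨f, u, v, h1, huv, h2⟩ :=
    geometric_hahn_banach_compact_closed hKconv hKcomp hNconv hNclosed hdisj
  set c : Fin n → ℝ := fun i => f (fun j => if i = j then 1 else 0) with hcdef
  have hfc : ∀ w : Fin n → ℝ, f w = ∑ i, w i * c i := by
    intro w
    conv_lhs => rw [pi_eq_sum_univ w, map_sum]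
    exact Finset.sum_congr rfl fun i _ => by rw [_root_.map_smul, smul_eq_mul]
  have hv0 : v < 0 := by
    have := h2 0 (fun i => le_refl 0)
    simpa using this
  have hu0 : u < 0 := huv.trans hv0
  have hc : ∀ i, c i ≤ 0 := by
    intro i
    by_contra hpos
    push_neg at hpos
    set r := (|v| + 1) / c i with hrdef
    have hr : 0 < r := div_pos (by positivity) hpos
    have hzN : (fun j => if i = j then -r else 0) ∈ N := by
      intro j; by_cases hj : i = j <;> simp [hj, hr.le]
    have hfz : f (fun j => if i = j then -r else 0) = -r * c i := by
      have : (fun j => if i = j then -r else 0) = (-r) • (fun j => if i = j then (1:ℝ) else 0) := by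
        funext j; by_cases hj : i = j <;> simp [hj]
      rw [this, _root_.map_smul, smul_eq_mul, hcdef]
    have hlt := h2 _ hzN
    rw [hfz] at hlt
    have hrc : r * c i = |v| + 1 := div_mul_cancel₀ _ (ne_of_gt hpos)
    have := neg_abs_le v
    nlinarith
  have hx0K : f (B.mulVecLin x0) < u := h1 _ ⟨x0, hx0, rfl⟩
  set s := ∑ i, -c i with hsdef
  have hs0 : 0 ≤ s := Finset.sum_nonneg fun i _ => neg_nonneg.2 (hc i)
  have hs : 0 < s := by
    rcases hs0.lt_or_eq with h' | h'
    · exact h'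
    · exfalso
      have hall : ∀ i, c i = 0 := by
        intro i
        have := (Finset.sum_eq_zero_iff_of_nonneg (fun i _ => neg_nonneg.2 (hc i))).1 h'.symm i (Finset.mem_univ i)
        linarith
      rw [hfc] at hx0K
      simp [hall] at hx0K
      linarith
  refine ⟨fun i => -c i / s, ⟨fun i => div_nonneg (neg_nonneg.2 (hc i)) hs0, by
      rw [← Finset.sum_div, ← hsdef, div_self hs.ne']⟩, -u / s, div_pos (neg_pos.2 hu0) hs, ?_⟩
  intro y hy
  have hfy : f (B.mulVec y) < u := by
    have := h1 _ ⟨y, hy, rfl⟩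
    simpa [Matrix.mulVecLin_apply] using this
  have hsum : ∑ i, (-c i / s) * B.mulVec y i = -(f (B.mulVec y)) / s := by
    calc ∑ i, -c i / s * (B.mulVec y) i = (∑ i, -((B.mulVec y) i * c i)) / s := by
          rw [Finset.sum_div]; exact Finset.sum_congr rfl fun i _ => by ring
      _ = -(f (B.mulVec y)) / s := by rw [Finset.sum_neg_distrib, hfc]
  rw [hsum]
  exact (div_le_div_iff_of_pos_right hs).2 (by linarith)

lemma dot_swap (A : Matrix (Fin n) (Fin n) ℝ) (x y : Fin n → ℝ) :
    dotProduct (A.mulVec x) y = ∑ j, x j * (Aᵀ.mulVec y) j := by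
  simp only [dotProduct, Matrix.mulVec, Matrix.transpose_apply, dotProduct,
    Finset.sum_mul, Finset.mul_sum]
  rw [Finset.sum_comm]
  exact Finset.sum_congr rfl fun i _ => Finset.sum_congr rfl fun j _ => by ring

lemma mem_le_one {x : Fin n → ℝ} (hx : x ∈ probSimplex n) (i : Fin n) : x i ≤ 1 := by
  rw [← hx.2]
  exact Finset.single_le_sum (fun j _ => hx.1 j) (Finset.mem_univ i)

lemma dot_bound (A : Matrix (Fin n) (Fin n) ℝ) {x y : Fin n → ℝ}
    (hx : x ∈ probSimplex n) (hy : y ∈ probSimplex n) :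
    |dotProduct (A.mulVec x) y| ≤ ∑ i, ∑ j, |A i j| := by
  have hAx : ∀ i, |A.mulVec x i| ≤ ∑ j, |A i j| := by
    intro i
    calc |∑ j, A i j * x j| ≤ ∑ j, |A i j * x j| := Finset.abs_sum_le_sum_abs _ _
      _ ≤ ∑ j, |A i j| := Finset.sum_le_sum fun j _ => by
          rw [abs_mul, abs_of_nonneg (hx.1 j)]
          exact mul_le_of_le_one_right (abs_nonneg _) (mem_le_one hx j)
  calc |∑ i, A.mulVec x i * y i| ≤ ∑ i, |A.mulVec x i * y i| := Finset.abs_sum_le_sum_abs _ _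
    _ ≤ ∑ i, ∑ j, |A i j| := Finset.sum_le_sum fun i _ => by
        rw [abs_mul, abs_of_nonneg (hy.1 i)]
        calc |A.mulVec x i| * y i ≤ |A.mulVec x i| * 1 :=
              mul_le_mul_of_nonneg_left (mem_le_one hy i) (abs_nonneg _)
          _ ≤ ∑ j, |A i j| := by rw [mul_one]; exact hAx i

lemma bddBelow_inner (A : Matrix (Fin n) (Fin n) ℝ) {x : Fin n → ℝ} (hx : x ∈ probSimplex n) :
    BddBelow (Set.range fun y : probSimplex n => dotProduct (A.mulVec x) (y : Fin n → ℝ)) := by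
  refine ⟨-(∑ i, ∑ j, |A i j|), ?_⟩
  rintro _ ⟨y, rfl⟩
  have := dot_bound A hx y.2
  exact neg_le_of_abs_le this

lemma value_ge (A : Matrix (Fin n) (Fin n) ℝ) {xb : Fin n → ℝ} (hxb : xb ∈ probSimplex n)
    {ε : ℝ} (h : ∀ y ∈ probSimplex n, ε ≤ dotProduct (A.mulVec xb) y) :
    ε ≤ matGameValue A := by
  haveI : Nonempty (probSimplex n) := ⟨⟨xb, hxb⟩⟩
  have hbdd : BddAbove (Set.range fun x : probSimplex n =>
      ⨅ y : probSimplex n, dotProduct (A.mulVec x) (y : Fin n → ℝ)) := by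
    refine ⟨∑ i, ∑ j, |A i j|, ?_⟩
    rintro _ ⟨x, rfl⟩
    have h1 : (⨅ y : probSimplex n, dotProduct (A.mulVec x) (y : Fin n → ℝ)) ≤
        dotProduct (A.mulVec x) xb := ciInf_le (bddBelow_inner A x.2) ⟨xb, hxb⟩
    exact h1.trans (le_of_abs_le (dot_bound A x.2 hxb))
  have h2 : ε ≤ ⨅ y : probSimplex n, dotProduct (A.mulVec xb) (y : Fin n → ℝ) :=
    le_ciInf fun y => h y y.2
  exact h2.trans (le_ciSup hbdd ⟨xb, hxb⟩)

lemma value_le (A : Matrix (Fin n) (Fin n) ℝ) {yb : Fin n → ℝ} (hyb : yb ∈ probSimplex n)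
    (x0 : Fin n → ℝ) (hx0 : x0 ∈ probSimplex n)
    {c : ℝ} (h : ∀ x ∈ probSimplex n, dotProduct (A.mulVec x) yb ≤ c) :
    matGameValue A ≤ c := by
  haveI : Nonempty (probSimplex n) := ⟨⟨x0, hx0⟩⟩
  refine ciSup_le fun x => ?_
  exact (ciInf_le (bddBelow_inner A x.2) ⟨yb, hyb⟩).trans (h x x.2)


/-- a Z-matrix with game value zero whose game is completely mixed
(every optimal pair is componentwise positive) is irreducible. -/
theorem stmt6 (A : Matrix (Fin n) (Fin n) ℝ)
    (hZ : IsZMatrix A) (hv : matGameValue A = 0)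
    (hcm : ∀ xb yb, MatOptPair A xb yb → (∀ i, 0 < xb i) ∧ (∀ i, 0 < yb i)) :
    MatIrreducible A := by
  classical
  intro S hSne hSuniv
  by_contra hcontra
  push_neg at hcontra
  -- hcontra : ∀ i ∈ S, ∀ j, j ∉ S → A i j = 0
  obtain ⟨i0, hi0⟩ := hSne
  have hn : 0 < n := i0.pos
  set x0 : Fin n → ℝ := fun _ => (n : ℝ)⁻¹ with hx0def
  have hx0 : x0 ∈ probSimplex n := by
    constructor
    · intro i; positivity
    · simp [hx0def, Finset.sum_const, Finset.card_univ]
      rw [mul_inv_cancel₀ (by exact_mod_cast hn.ne' : (n:ℝ) ≠ 0)]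
  -- existence of yb with Aᵀ yb ≤ 0
  have hybex : ∃ y ∈ probSimplex n, ∀ j, Aᵀ.mulVec y j ≤ 0 := by
    by_contra hno
    obtain ⟨x, hxΔ, ε, hε, hx⟩ := simplex_alt Aᵀ x0 hx0 hno
    have := value_ge A hxΔ (fun y hy => by rw [dot_swap]; exact hx y hy)
    rw [hv] at this; linarith
  -- existence of xb with A xb ≥ 0
  have hxbex : ∃ x ∈ probSimplex n, ∀ i, 0 ≤ A.mulVec x i := by
    by_contra hno
    have hno' : ¬ ∃ x ∈ probSimplex n, ∀ i, (-A).mulVec x i ≤ 0 := by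
      rintro ⟨x, hx, hle⟩
      refine hno ⟨x, hx, fun i => ?_⟩
      have := hle i
      rw [Matrix.neg_mulVec] at this
      simpa using this
    obtain ⟨y, hyΔ, ε, hε, hy⟩ := simplex_alt (-A) x0 hx0 hno'
    have hkey : ∀ x ∈ probSimplex n, dotProduct (A.mulVec x) y ≤ -ε := by
      intro x hx
      have h1 := hy x hx
      have heq : ∑ i, y i * ((-A).mulVec x) i = -dotProduct (A.mulVec x) y := by
        rw [Matrix.neg_mulVec]
        show ∑ i, y i * (-(A.mulVec x)) i = -∑ i, A.mulVec x i * y i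
        rw [← Finset.sum_neg_distrib]
        exact Finset.sum_congr rfl fun i _ => by simp [Pi.neg_apply]; ring
      rw [heq] at h1
      linarith
    have := value_le A hyΔ x0 hx0 hkey
    rw [hv] at this; linarith
  obtain ⟨xb, hxbΔ, hxb0⟩ := hxbex
  obtain ⟨yb, hybΔ, hyb0⟩ := hybex
  -- (xb, yb) is an optimal pair
  have hdotyb : ∀ x ∈ probSimplex n, dotProduct (A.mulVec x) yb ≤ 0 := by
    intro x hx
    rw [dot_swap]
    exact Finset.sum_nonpos fun j _ => mul_nonpos_of_nonneg_of_nonpos (hx.1 j) (hyb0 j)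
  have hdotxb : ∀ y ∈ probSimplex n, 0 ≤ dotProduct (A.mulVec xb) y := by
    intro y hy
    exact Finset.sum_nonneg fun i _ => mul_nonneg (hxb0 i) (hy.1 i)
  have hopt : MatOptPair A xb yb := by
    refine ⟨hxbΔ, hybΔ, fun x hx y hy => ⟨?_, ?_⟩⟩
    · exact (hdotyb x hx).trans (hdotxb yb hybΔ)
    · exact (hdotyb xb hxbΔ).trans (hdotxb y hy)
  obtain ⟨hxpos, hypos⟩ := hcm xb yb hopt
  have hdot0 : dotProduct (A.mulVec xb) yb = 0 :=
    le_antisymm (hdotyb xb hxbΔ) (hdotxb yb hybΔ)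
  -- A xb = 0 and Aᵀ yb = 0
  have hAxb : ∀ i, A.mulVec xb i = 0 := by
    have h1 : ∑ i, A.mulVec xb i * yb i = 0 := hdot0
    have h2 := (Finset.sum_eq_zero_iff_of_nonneg
      (fun i _ => mul_nonneg (hxb0 i) (hybΔ.1 i))).1 h1
    intro i
    have := h2 i (Finset.mem_univ i)
    exact (mul_eq_zero.1 this).resolve_right (ne_of_gt (hypos i))
  have hAtyb : ∀ j, Aᵀ.mulVec yb j = 0 := by
    have h1 : ∑ j, xb j * Aᵀ.mulVec yb j = 0 := by rw [← dot_swap]; exact hdot0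
    have h2 := (Finset.sum_eq_zero_iff_of_nonpos
      (fun j _ => mul_nonpos_of_nonneg_of_nonpos (hxbΔ.1 j) (hyb0 j))).1 h1
    intro j
    have := h2 j (Finset.mem_univ j)
    exact (mul_eq_zero.1 this).resolve_left (ne_of_gt (hxpos j))
  have hAtyb' : ∀ j, ∑ i, A i j * yb i = 0 := fun j => hAtyb j
  -- rows of S restricted to S sum to zero
  have hT1 : ∀ i ∈ S, ∑ j ∈ S, A i j * xb j = 0 := by
    intro i hi
    have h1 : ∑ j ∈ S, A i j * xb j = ∑ j, A i j * xb j := by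
      apply Finset.sum_subset (Finset.subset_univ S)
      intro j _ hj
      rw [hcontra i hi j hj, zero_mul]
    rw [h1]
    exact hAxb i
  -- the reverse block also vanishes
  have hblock2 : ∀ j ∈ S, ∀ i, i ∉ S → A i j = 0 := by
    have e1 : ∀ j ∈ S, ∑ i ∈ S, xb j * (A i j * yb i) + ∑ i ∈ Sᶜ, xb j * (A i j * yb i) = 0 := by
      intro j hj
      rw [Finset.sum_add_sum_compl, ← Finset.mul_sum, hAtyb' j, mul_zero]
    have e2 : ∑ j ∈ S, ∑ i ∈ S, xb j * (A i j * yb i) = 0 := by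
      rw [Finset.sum_comm]
      apply Finset.sum_eq_zero
      intro i hi
      have h3 : ∑ j ∈ S, xb j * (A i j * yb i) = yb i * ∑ j ∈ S, A i j * xb j := by
        rw [Finset.mul_sum]
        exact Finset.sum_congr rfl fun j _ => by ring
      rw [h3, hT1 i hi, mul_zero]
    have e3 : ∑ j ∈ S, (∑ i ∈ S, xb j * (A i j * yb i) + ∑ i ∈ Sᶜ, xb j * (A i j * yb i)) = 0 :=
      Finset.sum_eq_zero e1
    rw [Finset.sum_add_distrib, e2, zero_add] at e3
    have hterm : ∀ j ∈ S, ∀ i ∈ Sᶜ, xb j * (A i j * yb i) ≤ 0 := by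
      intro j hj i hi
      have hij : i ≠ j := fun h => (Finset.mem_compl.1 hi) (h ▸ hj)
      exact mul_nonpos_of_nonneg_of_nonpos (hxbΔ.1 j)
        (mul_nonpos_of_nonpos_of_nonneg (hZ i j hij) (hybΔ.1 i))
    have e4 := (Finset.sum_eq_zero_iff_of_nonpos
      (fun j hj => Finset.sum_nonpos (fun i hi => hterm j hj i hi))).1 e3
    intro j hj i hi
    have e5 := (Finset.sum_eq_zero_iff_of_nonpos (fun i hi => hterm j hj i hi)).1 (e4 j hj)
    have e6 := e5 i (Finset.mem_compl.2 hi)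
    have e7 := (mul_eq_zero.1 e6).resolve_left (ne_of_gt (hxpos j))
    exact (mul_eq_zero.1 e7).resolve_right (ne_of_gt (hypos i))
  -- build the degenerate optimal strategy
  set c : ℝ := ∑ j ∈ S, xb j with hcdef
  have hcpos : 0 < c := Finset.sum_pos (fun j _ => hxpos j) ⟨i0, hi0⟩
  set x' : Fin n → ℝ := fun j => if j ∈ S then xb j / c else 0 with hx'def
  have hx'Δ : x' ∈ probSimplex n := by
    refine ⟨fun j => ?_, ?_⟩
    · simp only [hx'def]
      split
      · exact div_nonneg (hxbΔ.1 j) hcpos.le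
      · exact le_rfl
    · have h1 : ∑ i, x' i = ∑ i ∈ S, xb i / c := by
        simp only [hx'def]
        rw [Finset.sum_ite_mem, Finset.univ_inter]
      rw [h1, ← Finset.sum_div, ← hcdef, div_self hcpos.ne']
  have hAx' : ∀ i, A.mulVec x' i = 0 := by
    intro i
    have h1 : A.mulVec x' i = (∑ j ∈ S, A i j * xb j) / c := by
      show ∑ j, A i j * x' j = _
      rw [Finset.sum_div]
      rw [hx'def]
      dsimp only
      simp only [mul_ite, mul_zero]
      rw [Finset.sum_ite_mem, Finset.univ_inter]
      exact Finset.sum_congr rfl fun j _ => (mul_div_assoc _ _ _).symm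
    rw [h1]
    by_cases hi : i ∈ S
    · rw [hT1 i hi, zero_div]
    · rw [Finset.sum_eq_zero fun j hj => by rw [hblock2 j hj i hi, zero_mul], zero_div]
  have hzero1 : ∀ x ∈ probSimplex n, dotProduct (A.mulVec x) yb = 0 := by
    intro x hx
    rw [dot_swap]
    exact Finset.sum_eq_zero fun j _ => by rw [hAtyb j, mul_zero]
  have hzero2 : ∀ y : Fin n → ℝ, dotProduct (A.mulVec x') y = 0 := by
    intro y
    exact Finset.sum_eq_zero fun i _ => by rw [hAx' i, zero_mul]
  have hopt' : MatOptPair A x' yb := by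
    refine ⟨hx'Δ, hybΔ, fun x hx y hy => ⟨?_, ?_⟩⟩
    · rw [hzero1 x hx, hzero1 x' hx'Δ]
    · rw [hzero1 x' hx'Δ, hzero2 y]
  obtain ⟨hx'pos, -⟩ := hcm x' yb hopt'
  obtain ⟨j0, hj0⟩ : ∃ j, j ∉ S := by
    by_contra hall
    push_neg at hall
    exact hSuniv (Finset.eq_univ_iff_forall.2 hall)
  have := hx'pos j0
  rw [hx'def] at this
  simp only [hj0, if_false] at this
  exact lt_irrefl 0 this
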